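/- There is a constant α > 0 depending only on n with the following property. Let p_0, …, p_n ∈ ℝ^m be the vertices of a (θ,h)-full Euclidean n-simplex with edge lengths ℓ_{ij} = ‖p_i − p_j‖ and Gram matrix g_{ij} = ⟨p_i − p_0, p_j − p_0⟩ (1 ≤ i, j ≤ n). Let ε < 1/2 and let ℓ̄_{ij} = ℓ̄_{ji} > 0 (for i ≠ j, with ℓ̄_{ii} = 0) be a system of numbers satisfying |ℓ_{ij} − ℓ̄_{ij}| ≤ α ε θ² ℓ_{ij} for all i, j. Define the symmetric matrix ḡ with entries ḡ_{ij} = (1/2)(ℓ̄_{0i}² + ℓ̄_{0j}² − ℓ̄_{ij}²) for 1 ≤ i, j ≤ n. Then ḡ is positive definite (so there exists a Euclidean n-simplex with edge lengths ℓ̄_{ij}), and |(g − ḡ)(v,v)| ≤ ε |v|_g² for every v ∈ ℝⁿ. -/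

import Mathlib

open scoped RealInnerProductSpace

open Finset Matrix

private lemma quad_eq' {k : ℕ} (M : Matrix (Fin k) (Fin k) ℝ) (x : Fin k → ℝ) :
    x ⬝ᵥ (M *ᵥ x) = ∑ i, ∑ j, M i j * x i * x j := by
  simp only [dotProduct, Matrix.mulVec, Finset.mul_sum]
  exact Finset.sum_congr rfl fun i _ => Finset.sum_congr rfl fun j _ => by ring

private lemma dot_self_eq' {k : ℕ} (x : Fin k → ℝ) : x ⬝ᵥ x = ∑ i, x i ^ 2 := by
  simp [dotProduct, sq]

private lemma quad_abs_bound' {k : ℕ} (M : Matrix (Fin k) (Fin k) ℝ) (x : Fin k → ℝ) (C : ℝ)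
    (hC : 0 ≤ C) (hM : ∀ i j, |M i j| ≤ C) :
    |∑ i, ∑ j, M i j * x i * x j| ≤ C * k * ∑ i, x i ^ 2 := by
  have h1 : |∑ i, ∑ j, M i j * x i * x j| ≤ C * (∑ i, |x i|) ^ 2 := by
    calc |∑ i, ∑ j, M i j * x i * x j| ≤ ∑ i, |∑ j, M i j * x i * x j| :=
          Finset.abs_sum_le_sum_abs _ _
      _ ≤ ∑ i, ∑ j, |M i j * x i * x j| :=
          Finset.sum_le_sum fun i _ => Finset.abs_sum_le_sum_abs _ _
      _ ≤ ∑ i, ∑ j, C * |x i| * |x j| := by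
          refine Finset.sum_le_sum fun i _ => Finset.sum_le_sum fun j _ => ?_
          rw [abs_mul, abs_mul]
          gcongr
          exact hM i j
      _ = C * ((∑ i, |x i|) * (∑ j, |x j|)) := by
          rw [Finset.sum_mul_sum, Finset.mul_sum]
          exact Finset.sum_congr rfl fun i _ => by
            rw [Finset.mul_sum]; exact Finset.sum_congr rfl fun j _ => by ring
      _ = C * (∑ i, |x i|) ^ 2 := by rw [sq]
  have h2 : (∑ i, |x i|) ^ 2 ≤ (k : ℝ) * ∑ i, x i ^ 2 := by
    have := sq_sum_le_card_mul_sum_sq (s := (Finset.univ : Finset (Fin k))) (f := fun i => |x i|)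
    simpa [sq_abs] using this
  calc |∑ i, ∑ j, M i j * x i * x j| ≤ C * (∑ i, |x i|) ^ 2 := h1
    _ ≤ C * ((k : ℝ) * ∑ i, x i ^ 2) := by gcongr
    _ = C * k * ∑ i, x i ^ 2 := by ring

private lemma sq_close' (l lb t h : ℝ) (h0 : 0 ≤ l) (h1 : l ≤ h) (h2 : 0 ≤ lb)
    (h3 : |l - lb| ≤ t * l) (h4 : 0 ≤ t) (h5 : t ≤ 1) :
    |l ^ 2 - lb ^ 2| ≤ 3 * t * h ^ 2 := by
  rw [abs_le] at h3 ⊢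
  obtain ⟨h3a, h3b⟩ := h3
  have htl : t * l ≤ l := by nlinarith
  have hlb2 : lb ≤ 2 * l := by linarith
  have hsum : 0 ≤ l + lb := by linarith
  have hU : (l - lb) * (l + lb) ≤ t * l * (l + lb) := mul_le_mul_of_nonneg_right h3b hsum
  have hL : (lb - l) * (l + lb) ≤ t * l * (l + lb) := mul_le_mul_of_nonneg_right (by linarith) hsum
  have htl0 : 0 ≤ t * l := mul_nonneg h4 h0
  have hMid : t * l * (l + lb) ≤ t * l * (3 * l) := by nlinarith
  have hend : t * l * (3 * l) ≤ 3 * t * h ^ 2 := by nlinarith [mul_le_mul h1 h1 h0 (le_trans h0 h1)]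
  constructor <;> nlinarith

private lemma quad_spectral' {k : ℕ} {G : Matrix (Fin k) (Fin k) ℝ} (hG : G.IsHermitian)
    (v : Fin k → ℝ) :
    ∃ w : Fin k → ℝ, v ⬝ᵥ (G *ᵥ v) = (∑ i, hG.eigenvalues i * (w i) ^ 2) ∧ w ⬝ᵥ w = v ⬝ᵥ v := by
  classical
  set U : Matrix (Fin k) (Fin k) ℝ := (hG.eigenvectorUnitary : Matrix (Fin k) (Fin k) ℝ) with hUdef
  have hU1 : U * star U = 1 := Matrix.mem_unitaryGroup_iff.mp hG.eigenvectorUnitary.2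
  have hvm : v ᵥ* U = star U *ᵥ v := by
    rw [Matrix.star_eq_conjTranspose, Matrix.conjTranspose_eq_transpose_of_trivial,
      Matrix.mulVec_transpose]
  refine ⟨star U *ᵥ v, ?_, ?_⟩
  · conv_lhs => rw [hG.spectral_theorem, Unitary.conjStarAlgAut_apply]
    rw [← Matrix.mulVec_mulVec, ← Matrix.mulVec_mulVec, Matrix.dotProduct_mulVec v, hvm,
      RCLike.ofReal_real_eq_id]
    simp only [dotProduct, Matrix.mulVec_diagonal, Function.comp, id]
    exact Finset.sum_congr rfl fun i _ => by ring
  · nth_rewrite 1 [← hvm]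
    rw [Matrix.dotProduct_mulVec, Matrix.vecMul_vecMul, hU1, Matrix.vecMul_one]

private lemma eig_le' {k : ℕ} {G : Matrix (Fin k) (Fin k) ℝ} (hG : G.IsHermitian) (T : ℝ)
    (hq : ∀ x : Fin k → ℝ, x ⬝ᵥ (G *ᵥ x) ≤ T * (x ⬝ᵥ x)) (i : Fin k) :
    hG.eigenvalues i ≤ T := by
  have h1 := hG.eigenvalues_eq i
  have hb : ‖hG.eigenvectorBasis i‖ = 1 := hG.eigenvectorBasis.orthonormal.1 i
  have hbd : (⇑(hG.eigenvectorBasis i) : Fin k → ℝ) ⬝ᵥ ⇑(hG.eigenvectorBasis i) = 1 := by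
    have h2 : ‖hG.eigenvectorBasis i‖ ^ 2 = 1 := by rw [hb]; norm_num
    rw [← real_inner_self_eq_norm_sq] at h2
    rw [← h2]
    simp only [dotProduct, PiLp.inner_apply, RCLike.inner_apply, conj_trivial]
  have h3 : hG.eigenvalues i
      = (⇑(hG.eigenvectorBasis i) : Fin k → ℝ) ⬝ᵥ (G *ᵥ ⇑(hG.eigenvectorBasis i)) := by
    simpa using h1
  rw [h3]
  calc _ ≤ T * ((⇑(hG.eigenvectorBasis i) : Fin k → ℝ) ⬝ᵥ ⇑(hG.eigenvectorBasis i)) := hq _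
    _ = T := by rw [hbd, mul_one]


set_option maxHeartbeats 1000000 in
/-- There is a constant `α > 0` depending only on `n` such that:
if `p 0, …, p n` are the vertices of a `(θ,h)`-full Euclidean `n`-simplex with edge
lengths `ℓᵢⱼ = ‖pᵢ - pⱼ‖` and Gram matrix `gᵢⱼ = ⟪pᵢ - p₀, pⱼ - p₀⟫`, `ε < 1/2`,
and `ℓ̄ᵢⱼ` is a symmetric system of positive lengths with
`|ℓᵢⱼ - ℓ̄ᵢⱼ| ≤ α ε θ² ℓᵢⱼ`, then the matrix
`ḡᵢⱼ = (1/2)(ℓ̄₀ᵢ² + ℓ̄₀ⱼ² - ℓ̄ᵢⱼ²)` is positive definite (so a Euclidean simplex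
with edge lengths `ℓ̄ᵢⱼ` exists), and `|(g - ḡ)(v,v)| ≤ ε |v|_g²` for all `v`. -/
theorem exists_alpha_flat_metrics_close (n : ℕ) :
    ∃ α : ℝ, 0 < α ∧
      ∀ (m : ℕ) (θ h ε : ℝ), 0 < θ → 0 < h → ε < 1 / 2 →
        ∀ p : Fin (n + 1) → EuclideanSpace ℝ (Fin m),
          (∀ i j, ‖p i - p j‖ ≤ h) →
          θ ^ 2 * h ^ (2 * n) ≤
            (Matrix.of fun i j : Fin n => ⟪p i.succ - p 0, p j.succ - p 0⟫).det →
        ∀ lbar : Fin (n + 1) → Fin (n + 1) → ℝ,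
          (∀ i j, lbar i j = lbar j i) →
          (∀ i, lbar i i = 0) →
          (∀ i j, i ≠ j → 0 < lbar i j) →
          (∀ i j, |‖p i - p j‖ - lbar i j| ≤ α * ε * θ ^ 2 * ‖p i - p j‖) →
          (Matrix.of fun i j : Fin n =>
            (1 / 2) * (lbar 0 i.succ ^ 2 + lbar 0 j.succ ^ 2 -
              lbar i.succ j.succ ^ 2)).PosDef ∧
          ∀ v : Fin n → ℝ,
            |∑ i, ∑ j, (⟪p i.succ - p 0, p j.succ - p 0⟫ -
                (1 / 2) * (lbar 0 i.succ ^ 2 + lbar 0 j.succ ^ 2 -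
                  lbar i.succ j.succ ^ 2)) * v i * v j| ≤
              ε * ∑ i, ∑ j, ⟪p i.succ - p 0, p j.succ - p 0⟫ * v i * v j := by
  classical
  refine ⟨1 / (9 * ((n : ℝ) + 1) ^ (n + 1)), by positivity, ?_⟩
  intro m θ h ε hθ hh hε p hedge hdet lbar hsymm hdiag hpos happ
  set α : ℝ := 1 / (9 * ((n : ℝ) + 1) ^ (n + 1)) with hαdef
  have hα0 : 0 < α := by rw [hαdef]; positivity
  -- trivial case n = 0
  rcases Nat.eq_zero_or_pos n with hn0 | hn
  · subst hn0
    refine ⟨Matrix.posDef_iff_dotProduct_mulVec.mpr ⟨Matrix.ext fun i _ => i.elim0, fun x hx => absurd (funext fun i => i.elim0) hx⟩,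
      fun v => by simp⟩
  -- main machinery
  have hn' : (0 : ℝ) < n := by exact_mod_cast hn
  set G : Matrix (Fin n) (Fin n) ℝ :=
    Matrix.of (fun i j : Fin n => ⟪p i.succ - p 0, p j.succ - p 0⟫) with hGdef
  set Gb : Matrix (Fin n) (Fin n) ℝ :=
    Matrix.of (fun i j : Fin n =>
      (1 / 2) * (lbar 0 i.succ ^ 2 + lbar 0 j.succ ^ 2 - lbar i.succ j.succ ^ 2)) with hGbdef
  have hpol : ∀ x y : EuclideanSpace ℝ (Fin m),
      ⟪x, y⟫ = (1 / 2) * (‖x‖ ^ 2 + ‖y‖ ^ 2 - ‖x - y‖ ^ 2) := by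
    intro x y
    have := norm_sub_sq_real x y
    linarith
  have hGherm : G.IsHermitian := Matrix.ext fun i j => by
    simp only [Matrix.conjTranspose_apply, hGdef, Matrix.of_apply, star_trivial]
    exact real_inner_comm _ _
  have hGabs : ∀ i j, |G i j| ≤ h ^ 2 := by
    intro i j
    simp only [hGdef, Matrix.of_apply]
    calc |⟪p i.succ - p 0, p j.succ - p 0⟫| ≤ ‖p i.succ - p 0‖ * ‖p j.succ - p 0‖ :=
          abs_real_inner_le_norm _ _
      _ ≤ h * h := mul_le_mul (hedge _ _) (hedge _ _) (norm_nonneg _) (le_trans (norm_nonneg _) (hedge i.succ 0))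
      _ = h ^ 2 := (sq h).symm
  have hQub : ∀ x : Fin n → ℝ, x ⬝ᵥ (G *ᵥ x) ≤ (n : ℝ) * h ^ 2 * (x ⬝ᵥ x) := by
    intro x
    rw [quad_eq', dot_self_eq']
    calc ∑ i, ∑ j, G i j * x i * x j ≤ |∑ i, ∑ j, G i j * x i * x j| := le_abs_self _
      _ ≤ h ^ 2 * n * ∑ i, x i ^ 2 := quad_abs_bound' G x (h ^ 2) (by positivity) hGabs
      _ = (n : ℝ) * h ^ 2 * ∑ i, x i ^ 2 := by ring
  have hquad_inner : ∀ x : Fin n → ℝ,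
      x ⬝ᵥ (G *ᵥ x) = ⟪∑ i, x i • (p i.succ - p 0), ∑ j, x j • (p j.succ - p 0)⟫ := by
    intro x
    rw [quad_eq']
    simp only [sum_inner, inner_sum, real_inner_smul_left, real_inner_smul_right, hGdef,
      Matrix.of_apply]
    refine Finset.sum_congr rfl fun i _ => Finset.sum_congr rfl fun j _ => ?_
    rw [real_inner_comm (p j.succ - p 0) (p i.succ - p 0)]
    ring
  have hsx : ∀ x : Fin n → ℝ, star x = x := fun x => funext fun i => by simp
  have hPSD : G.PosSemidef := by
    refine Matrix.posSemidef_iff_dotProduct_mulVec.mpr ⟨hGherm, fun x => ?_⟩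
    rw [hsx, hquad_inner]
    exact real_inner_self_nonneg
  set lam : Fin n → ℝ := hGherm.eigenvalues with hlamdef
  have hlam0 : ∀ i, 0 ≤ lam i := hPSD.eigenvalues_nonneg
  have hlamT : ∀ i, lam i ≤ (n : ℝ) * h ^ 2 := eig_le' hGherm _ hQub
  have hdet' : ∏ i, lam i = G.det := by
    have := hGherm.det_eq_prod_eigenvalues
    simpa using this.symm
  have hh2n : (0 : ℝ) < h ^ (2 * n) := by positivity
  have hθn : θ ^ 2 ≤ (n : ℝ) ^ n := by
    have h1 : ∏ i, lam i ≤ ((n : ℝ) * h ^ 2) ^ n := by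
      calc ∏ i, lam i ≤ ∏ _i : Fin n, ((n : ℝ) * h ^ 2) :=
            Finset.prod_le_prod (fun i _ => hlam0 i) (fun i _ => hlamT i)
        _ = ((n : ℝ) * h ^ 2) ^ n := by
            rw [Finset.prod_const, Finset.card_univ, Fintype.card_fin]
    have h2 : θ ^ 2 * h ^ (2 * n) ≤ (n : ℝ) ^ n * h ^ (2 * n) := by
      calc θ ^ 2 * h ^ (2 * n) ≤ G.det := hdet
        _ = ∏ i, lam i := hdet'.symm
        _ ≤ ((n : ℝ) * h ^ 2) ^ n := h1
        _ = (n : ℝ) ^ n * h ^ (2 * n) := by rw [mul_pow, ← pow_mul]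
    exact le_of_mul_le_mul_right h2 hh2n
  have hNpos : (0 : ℝ) < (n : ℝ) ^ (n - 1) := pow_pos hn' _
  set c : ℝ := θ ^ 2 * h ^ 2 / (n : ℝ) ^ (n - 1) with hcdef
  have hcpos : 0 < c := by rw [hcdef]; positivity
  have hpowh : h ^ 2 * h ^ (2 * (n - 1)) = h ^ (2 * n) := by
    rw [← pow_add]; congr 1; omega
  have hclam : ∀ i, c ≤ lam i := by
    intro i
    have hprod : ∏ j ∈ univ.erase i, lam j ≤ ((n : ℝ) * h ^ 2) ^ (n - 1) := by
      calc ∏ j ∈ univ.erase i, lam j ≤ ∏ _j ∈ univ.erase i, ((n : ℝ) * h ^ 2) :=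
            Finset.prod_le_prod (fun j _ => hlam0 j) (fun j _ => hlamT j)
        _ = ((n : ℝ) * h ^ 2) ^ (n - 1) := by
            rw [Finset.prod_const, Finset.card_erase_of_mem (Finset.mem_univ i),
              Finset.card_univ, Fintype.card_fin]
    have hsplit : lam i * ∏ j ∈ univ.erase i, lam j = ∏ j, lam j :=
      Finset.mul_prod_erase univ lam (Finset.mem_univ i)
    have h1 : θ ^ 2 * h ^ (2 * n) ≤ lam i * ((n : ℝ) ^ (n - 1) * h ^ (2 * (n - 1))) := by
      calc θ ^ 2 * h ^ (2 * n) ≤ G.det := hdet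
        _ = ∏ j, lam j := hdet'.symm
        _ = lam i * ∏ j ∈ univ.erase i, lam j := hsplit.symm
        _ ≤ lam i * ((n : ℝ) * h ^ 2) ^ (n - 1) :=
            mul_le_mul_of_nonneg_left hprod (hlam0 i)
        _ = lam i * ((n : ℝ) ^ (n - 1) * h ^ (2 * (n - 1))) := by rw [mul_pow, ← pow_mul]
    have hNH : (0 : ℝ) < (n : ℝ) ^ (n - 1) * h ^ (2 * (n - 1)) := by positivity
    have key : c * ((n : ℝ) ^ (n - 1) * h ^ (2 * (n - 1))) = θ ^ 2 * h ^ (2 * n) := by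
      rw [hcdef, ← hpowh]
      field_simp
    refine le_of_mul_le_mul_right ?_ hNH
    rw [key]
    exact h1
  have hQlb : ∀ v : Fin n → ℝ, c * (v ⬝ᵥ v) ≤ v ⬝ᵥ (G *ᵥ v) := by
    intro v
    obtain ⟨w, hw1, hw2⟩ := quad_spectral' hGherm v
    rw [hw1, ← hw2, dot_self_eq']
    rw [Finset.mul_sum]
    exact Finset.sum_le_sum fun i _ => mul_le_mul_of_nonneg_right (hclam i) (sq_nonneg _)
  have hdotpos : ∀ x : Fin n → ℝ, x ≠ 0 → 0 < x ⬝ᵥ x := by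
    intro x hx
    rw [dot_self_eq']
    obtain ⟨i, hi⟩ := Function.ne_iff.mp hx
    exact Finset.sum_pos' (fun j _ => sq_nonneg _)
      ⟨i, Finset.mem_univ i, (sq_nonneg _).lt_of_ne (Ne.symm (pow_ne_zero 2 hi))⟩
  have hGpd : G.PosDef := by
    refine Matrix.posDef_iff_dotProduct_mulVec.mpr ⟨hGherm, fun x hx => ?_⟩
    rw [hsx]
    exact lt_of_lt_of_le (mul_pos hcpos (hdotpos x hx)) (hQlb x)
  -- case split on sign of ε
  rcases le_or_gt ε 0 with hε0 | hε0
  · rcases hε0.lt_or_eq with hlt | heq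
    · -- ε < 0 : contradiction
      exfalso
      set j : Fin (n + 1) := Fin.succ ⟨0, hn⟩ with hjdef
      have hne : (0 : Fin (n + 1)) ≠ j := (Fin.succ_ne_zero _).symm
      have hp := hpos 0 j hne
      have ha := happ 0 j
      have hL : (0 : ℝ) ≤ ‖p 0 - p j‖ := norm_nonneg _
      have ht : α * ε * θ ^ 2 < 0 :=
        mul_neg_of_neg_of_pos (mul_neg_of_pos_of_neg hα0 hlt) (by positivity)
      have habs : 0 ≤ |‖p 0 - p j‖ - lbar 0 j| := abs_nonneg _
      have hup : lbar 0 j - ‖p 0 - p j‖ ≤ |‖p 0 - p j‖ - lbar 0 j| := by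
        rw [abs_sub_comm]; exact le_abs_self _
      nlinarith [mul_nonpos_of_nonpos_of_nonneg ht.le hL, mul_neg_of_neg_of_pos ht hp]
    · -- ε = 0 : exact equality
      subst heq
      have hl : ∀ a b, lbar a b = ‖p a - p b‖ := by
        intro a b
        have h1 := happ a b
        have h2 := le_abs_self (‖p a - p b‖ - lbar a b)
        have h3 := neg_abs_le (‖p a - p b‖ - lbar a b)
        nlinarith
      have hGbG : Gb = G := by
        ext i j
        simp only [hGbdef, hGdef, Matrix.of_apply]
        rw [hl 0 i.succ, hl 0 j.succ, hl i.succ j.succ, hpol, sub_sub_sub_cancel_right,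
          norm_sub_rev (p 0) (p i.succ), norm_sub_rev (p 0) (p j.succ)]
      refine ⟨hGbG ▸ hGpd, fun v => ?_⟩
      have hz : ∀ i j : Fin n, ⟪p i.succ - p 0, p j.succ - p 0⟫ -
          (1 / 2) * (lbar 0 i.succ ^ 2 + lbar 0 j.succ ^ 2 - lbar i.succ j.succ ^ 2) = 0 := by
        intro i j
        have : Gb i j = G i j := by rw [hGbG]
        simp only [hGbdef, hGdef, Matrix.of_apply] at this
        linarith
      rw [zero_mul]
      refine le_of_eq ?_
      rw [abs_eq_zero]
      refine Finset.sum_eq_zero fun i _ => Finset.sum_eq_zero fun j _ => ?_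
      rw [hz i j, zero_mul, zero_mul]
  -- main case 0 < ε
  set t : ℝ := α * ε * θ ^ 2 with htdef
  have ht0 : 0 ≤ t := by rw [htdef]; positivity
  have hmono : (n : ℝ) ^ n ≤ ((n : ℝ) + 1) ^ (n + 1) := by
    calc (n : ℝ) ^ n ≤ ((n : ℝ) + 1) ^ n := by gcongr <;> linarith [hn'.le]
      _ ≤ ((n : ℝ) + 1) ^ (n + 1) := by
          apply pow_le_pow_right₀ (by linarith) (Nat.le_succ n)
  have hA : α * ((n : ℝ) + 1) ^ (n + 1) = 1 / 9 := by
    rw [hαdef]; field_simp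
  have hαn : α * (n : ℝ) ^ n ≤ 1 / 9 := by
    rw [← hA]
    exact mul_le_mul_of_nonneg_left hmono hα0.le
  have ht1 : t ≤ 1 := by
    have h1 : t ≤ α * (1 / 2) * (n : ℝ) ^ n := by
      rw [htdef]
      have ha : α * ε ≤ α * (1 / 2) := by nlinarith
      exact mul_le_mul ha hθn (sq_nonneg θ) (by positivity)
    nlinarith
  have hlbnn : ∀ a b, 0 ≤ lbar a b := by
    intro a b
    rcases eq_or_ne a b with rfl | hab
    · simp [hdiag]
    · exact (hpos a b hab).le
  have hsq : ∀ a b, |‖p a - p b‖ ^ 2 - lbar a b ^ 2| ≤ 3 * t * h ^ 2 := fun a b =>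
    sq_close' _ _ _ _ (norm_nonneg _) (hedge a b) (hlbnn a b) (happ a b) ht0 ht1
  have hΔ : ∀ i j, |G i j - Gb i j| ≤ 9 / 2 * (t * h ^ 2) := by
    intro i j
    simp only [hGdef, hGbdef, Matrix.of_apply]
    rw [hpol, sub_sub_sub_cancel_right, norm_sub_rev (p i.succ) (p 0),
      norm_sub_rev (p j.succ) (p 0)]
    have h1 := hsq 0 i.succ
    have h2 := hsq 0 j.succ
    have h3 := hsq i.succ j.succ
    rw [abs_le] at h1 h2 h3 ⊢
    constructor <;> [nlinarith; nlinarith]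
  have hGbherm : Gb.IsHermitian := Matrix.ext fun i j => by
    simp only [Matrix.conjTranspose_apply, hGbdef, Matrix.of_apply, star_trivial]
    rw [hsymm i.succ j.succ]
    ring
  have he3 : 9 / 2 * (t * h ^ 2) * n ≤ ε * c := by
    have hnn1 : (n : ℝ) * (n : ℝ) ^ (n - 1) = (n : ℝ) ^ n := by
      rw [← pow_succ']
      congr 1
      omega
    have hre : ε * c = ε * θ ^ 2 * h ^ 2 / (n : ℝ) ^ (n - 1) := by rw [hcdef]; ring
    rw [hre, le_div_iff₀ hNpos, htdef]
    have hfin : (9 : ℝ) / 2 * α * (n : ℝ) ^ n ≤ 1 := by nlinarith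
    calc 9 / 2 * (α * ε * θ ^ 2 * h ^ 2) * n * (n : ℝ) ^ (n - 1)
        = 9 / 2 * α * (n : ℝ) ^ n * (ε * θ ^ 2 * h ^ 2) := by rw [← hnn1]; ring
      _ ≤ 1 * (ε * θ ^ 2 * h ^ 2) := mul_le_mul_of_nonneg_right hfin (by positivity)
      _ = ε * θ ^ 2 * h ^ 2 := one_mul _
  have hEst : ∀ v : Fin n → ℝ,
      |∑ i, ∑ j, (G i j - Gb i j) * v i * v j| ≤ ε * (v ⬝ᵥ (G *ᵥ v)) := by
    intro v
    have e1 : |∑ i, ∑ j, (G i j - Gb i j) * v i * v j|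
        ≤ 9 / 2 * (t * h ^ 2) * n * ∑ i, v i ^ 2 := by
      have := quad_abs_bound' (G - Gb) v (9 / 2 * (t * h ^ 2)) (by positivity)
        (fun i j => by rw [Matrix.sub_apply]; exact hΔ i j)
      simpa [Matrix.sub_apply] using this
    have hS : (0 : ℝ) ≤ ∑ i, v i ^ 2 := Finset.sum_nonneg fun i _ => sq_nonneg _
    calc |∑ i, ∑ j, (G i j - Gb i j) * v i * v j|
        ≤ 9 / 2 * (t * h ^ 2) * n * ∑ i, v i ^ 2 := e1
      _ ≤ ε * c * ∑ i, v i ^ 2 := mul_le_mul_of_nonneg_right he3 hS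
      _ = ε * (c * ∑ i, v i ^ 2) := by ring
      _ ≤ ε * (v ⬝ᵥ (G *ᵥ v)) := by
          apply mul_le_mul_of_nonneg_left _ hε0.le
          rw [← dot_self_eq']
          exact hQlb v
  have hsplitQ : ∀ x : Fin n → ℝ,
      x ⬝ᵥ (Gb *ᵥ x) = x ⬝ᵥ (G *ᵥ x) - ∑ i, ∑ j, (G i j - Gb i j) * x i * x j := by
    intro x
    rw [quad_eq', quad_eq', ← Finset.sum_sub_distrib]
    refine Finset.sum_congr rfl fun i _ => ?_
    rw [← Finset.sum_sub_distrib]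
    exact Finset.sum_congr rfl fun j _ => by ring
  refine ⟨Matrix.posDef_iff_dotProduct_mulVec.mpr ⟨hGbherm, fun x hx => ?_⟩, fun v => ?_⟩
  · rw [hsx, hsplitQ]
    have h1 := hEst x
    have h2 := le_trans (le_abs_self _) h1
    have hQpos : 0 < x ⬝ᵥ (G *ᵥ x) :=
      lt_of_lt_of_le (mul_pos hcpos (hdotpos x hx)) (hQlb x)
    nlinarith [mul_pos (show (0 : ℝ) < 1 - ε by linarith) hQpos]
  · have h1 := hEst v
    rw [quad_eq'] at h1
    simpa only [hGdef, hGbdef, Matrix.of_apply, sub_mul] using h1
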